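/- arXiv:2404.01200 — 4 statements merged into one kernel-verified Lean document; each statement's English description precedes it below -/
import Mathlib

section
/- The convex conjugate of the Cressie-Read function φ_k is φ_k*(t) = (1/k)·[((k-1)t + 1)_+^{k*} − 1], where k* = k/(k-1), i.e., sup_{s ≥ 0} (t·s − φ_k(s)) = (1/k)·[((k-1)t + 1)_+^{k*} − 1] for all t ∈ ℝ. -/
/-- The convex conjugate of the Cressie-Read function φ_k is
φ_k*(t) = (1/k)·[((k-1)t + 1)_+^{k*} − 1], with k* = k/(k-1):
sup_{s ≥ 0} (t·s − φ_k(s)) equals this value for all t ∈ ℝ. -/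
theorem cressie_read_conjugate (k : ℝ) (hk1 : 1 < k) (hk2 : k ≤ 2) (t : ℝ) :
    IsLUB {y : ℝ | ∃ s : ℝ, 0 ≤ s ∧ y = t * s - (s ^ k - k * s + k - 1) / (k * (k - 1))}
      ((1 / k) * ((max ((k - 1) * t + 1) 0) ^ (k / (k - 1)) - 1)) := by
  have hk0 : (0:ℝ) < k := by linarith
  have hk1' : (0:ℝ) < k - 1 := by linarith
  set c : ℝ := (k - 1) * t + 1 with hc
  set m : ℝ := max c 0 with hm
  have hm0 : (0:ℝ) ≤ m := le_max_right _ _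
  have hcm : c ≤ m := le_max_left _ _
  have hpq : Real.HolderConjugate k (k / (k - 1)) :=
    Real.HolderConjugate.conjExponent hk1
  have hq0 : (0:ℝ) < k / (k - 1) := hpq.symm.pos
  have hkk : (0:ℝ) < k * (k-1) := by positivity
  constructor
  · rintro y ⟨s, hs, rfl⟩
    have hy : s * m ≤ s ^ k / k + m ^ (k / (k - 1)) / (k / (k - 1)) :=
      Real.young_inequality_of_nonneg hs hm0 hpq
    have h2 : k * (m ^ (k / (k - 1)) / (k / (k - 1))) = (k - 1) * m ^ (k / (k - 1)) := by
      field_simp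
    have h3 : k * (s ^ k / k) = s ^ k := by field_simp
    have key : k * (s * m) ≤ s ^ k + (k - 1) * m ^ (k / (k - 1)) := by
      calc k * (s * m) ≤ k * (s ^ k / k + m ^ (k / (k - 1)) / (k / (k - 1))) :=
            mul_le_mul_of_nonneg_left hy hk0.le
        _ = s ^ k + (k - 1) * m ^ (k / (k - 1)) := by rw [mul_add, h3, h2]
    have hsc : s * c ≤ s * m := mul_le_mul_of_nonneg_left hcm hs
    have key2 : k * (s * ((k-1)*t+1)) ≤ s ^ k + (k - 1) * m ^ (k / (k - 1)) := by
      refine le_trans ?_ key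
      have := mul_le_mul_of_nonneg_left hsc hk0.le
      rw [hc] at this; exact this
    generalize s ^ k = A at key2
    generalize m ^ (k / (k-1)) = B at key2 ⊢
    rw [show t * s - (A - k * s + k - 1) / (k * (k - 1)) =
        (k * (k-1) * (t*s) - (A - k * s + k - 1)) / (k * (k - 1)) by field_simp,
      show (1:ℝ)/k * (B - 1) = ((k-1) * (B-1)) / (k * (k-1)) by field_simp,
      div_le_div_iff_of_pos_right hkk]
    nlinarith [key2]
  · intro b hb
    apply hb
    refine ⟨m ^ ((1:ℝ) / (k - 1)), Real.rpow_nonneg hm0 _, ?_⟩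
    set S : ℝ := m ^ ((1:ℝ) / (k - 1)) with hS
    have hSk : S ^ k = m ^ (k / (k - 1)) := by
      rw [hS, ← Real.rpow_mul hm0]
      congr 1
      field_simp
    rcases le_or_gt 0 c with hc0 | hc0
    · have hmc : m = c := max_eq_left hc0
      have h1 : m * S = m ^ (k / (k - 1)) := by
        nth_rewrite 1 [← Real.rpow_one m]
        rw [hS, ← Real.rpow_add' hm0 (by positivity)]
        congr 1
        field_simp; ring
      have h2 : (k - 1) * t = m - 1 := by rw [hmc, hc]; ring
      rw [hSk]
      have hk : k ≠ 0 := ne_of_gt hk0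
      have hk1'' : k - 1 ≠ 0 := ne_of_gt hk1'
      field_simp
      linear_combination (-(k*S))*h2 + (-k)*h1
    · have hmc : m = 0 := max_eq_right hc0.le
      have hS0 : S = 0 := by
        rw [hS, hmc, Real.zero_rpow (by positivity)]
      rw [hS0, hmc, Real.zero_rpow (ne_of_gt hk0), Real.zero_rpow (ne_of_gt hq0)]
      field_simp
      ring
end

section
/- The convex conjugate of the smoothed-CVaR divergence φ_s equals φ_s*(t) = (1/μ)·log(1 − μ + μ·e^t), i.e., sup_{0 ≤ s < 1/μ} (t·s − φ_s(s)) = (1/μ)·log(1 − μ + μ·e^t) for every t ∈ ℝ. -/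
/-- The convex conjugate of the smoothed-CVaR divergence φ_s is
φ_s*(t) = (1/μ)log(1−μ+μe^t): sup over 0 ≤ s < 1/μ of (t·s − φ_s(s)) equals this. -/
theorem smoothed_cvar_conjugate (μ : ℝ) (hμ0 : 0 < μ) (hμ1 : μ < 1) (t : ℝ) :
    IsLUB {y : ℝ | ∃ s : ℝ, 0 ≤ s ∧ s < 1 / μ ∧
        y = t * s - (s * Real.log s + ((1 - μ * s) / μ) * Real.log ((1 - μ * s) / (1 - μ)))}
      ((1 / μ) * Real.log (1 - μ + μ * Real.exp t)) := by
  have h1μ : (0:ℝ) < 1 - μ := by linarith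
  have hE : (0:ℝ) < Real.exp t := Real.exp_pos t
  have hA : (0:ℝ) < 1 - μ + μ * Real.exp t := by nlinarith
  set A := 1 - μ + μ * Real.exp t with hAdef
  constructor
  · -- upper bound
    rintro y ⟨s, hs0, hs1, rfl⟩
    have hμs : μ * s < 1 := by
      have := (lt_div_iff₀ hμ0).mp hs1
      linarith
    rcases eq_or_lt_of_le hs0 with h0 | hs
    · -- s = 0
      subst h0
      simp only [mul_zero, sub_zero, zero_mul, Real.log_zero, one_div]
      rw [Real.log_inv]
      have hlog : Real.log (1 - μ) ≤ Real.log A :=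
        Real.log_le_log h1μ (by nlinarith)
      have hinv : (0:ℝ) ≤ μ⁻¹ := by positivity
      nlinarith [mul_le_mul_of_nonneg_left hlog hinv]
    · -- s > 0
      have hb : (0:ℝ) < 1 - μ * s := by linarith
      have hx : μ * s * (t - (Real.log s + Real.log A)) ≤ μ * Real.exp t / A - μ * s := by
        have h1 : Real.log (Real.exp t / (s * A)) ≤ Real.exp t / (s * A) - 1 :=
          Real.log_le_sub_one_of_pos (by positivity)
        rw [Real.log_div (Real.exp_ne_zero t) (by positivity), Real.log_exp,
          Real.log_mul hs.ne' hA.ne'] at h1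
        have h2 := mul_le_mul_of_nonneg_left h1 (by positivity : (0:ℝ) ≤ μ * s)
        have heq : μ * s * (Real.exp t / (s * A) - 1) = μ * Real.exp t / A - μ * s := by
          field_simp
        linarith [heq ▸ h2]
      have hy : (1 - μ * s) * (Real.log (1 - μ) - (Real.log (1 - μ * s) + Real.log A)) ≤
          (1 - μ) / A - (1 - μ * s) := by
        have h1 : Real.log ((1 - μ) / ((1 - μ * s) * A)) ≤ (1 - μ) / ((1 - μ * s) * A) - 1 :=
          Real.log_le_sub_one_of_pos (by positivity)
        rw [Real.log_div h1μ.ne' (by positivity), Real.log_mul hb.ne' hA.ne'] at h1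
        have h2 := mul_le_mul_of_nonneg_left h1 hb.le
        have heq : (1 - μ * s) * ((1 - μ) / ((1 - μ * s) * A) - 1) = (1 - μ) / A - (1 - μ * s) := by
          field_simp
        linarith [heq ▸ h2]
      have hsum : μ * Real.exp t / A + (1 - μ) / A = 1 := by
        field_simp
        ring
      rw [Real.log_div hb.ne' h1μ.ne']
      rw [← mul_le_mul_iff_right₀ hμ0]
      have hgoal : μ * (t * s - (s * Real.log s +
          (1 - μ * s) / μ * (Real.log (1 - μ * s) - Real.log (1 - μ)))) =
          μ * s * t - μ * s * Real.log s - (1 - μ * s) * (Real.log (1 - μ * s) - Real.log (1 - μ)) := by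
        field_simp
        ring
      have hgoal2 : μ * (1 / μ * Real.log A) = Real.log A := by
        field_simp
      rw [hgoal, hgoal2]
      nlinarith [hx, hy]
  · -- least upper bound
    rintro b hb
    apply hb
    refine ⟨Real.exp t / A, by positivity, ?_, ?_⟩
    · rw [div_lt_div_iff₀ hA hμ0]
      nlinarith
    · have h1 : 1 - μ * (Real.exp t / A) = (1 - μ) / A := by
        field_simp
        ring
      rw [h1]
      have h2 : (1 - μ) / A / (1 - μ) = A⁻¹ := by
        field_simp
      rw [h2, Real.log_inv, Real.log_div (Real.exp_ne_zero t) hA.ne', Real.log_exp]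
      field_simp
      ring
end

section
/- Plugging the optimal λ*(η) into the dual objective yields inf_{λ>0} F(λ, η) = ω·(E[(L−η)_+^{k*}])^{1/k*} + η, where ω = (k(k−1)ρ + 1)^{1/k}. -/
open Real

private lemma rpow_rpow {x : ℝ} (hx : 0 ≤ x) (a b : ℝ) : (x ^ a) ^ b = x ^ (a * b) :=
  (Real.rpow_mul hx a b).symm

/-- Plugging the optimal λ*(η) into the dual objective:
inf_{λ>0} F(λ,η) = ω (E[(L−η)₊^{k*}])^{1/k*} + η with ω = (k(k−1)ρ+1)^{1/k}. -/
theorem dual_objective_infimum {ι : Type*} [Fintype ι] (k ρ η : ℝ) (hk1 : 1 < k)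
    (hk2 : k ≤ 2) (hρ : 0 < ρ) (p L : ι → ℝ) (hp : ∀ i, 0 ≤ p i) (hpsum : ∑ i, p i = 1)
    (hpos : 0 < ∑ i, p i * (max (L i - η) 0) ^ (k / (k - 1))) :
    IsGLB {y : ℝ | ∃ lam : ℝ, 0 < lam ∧
        y = ((k - 1) ^ (k / (k - 1)) / k) * (∑ i, p i * (max (L i - η) 0) ^ (k / (k - 1)))
              * lam ^ (1 - k / (k - 1)) + lam * (ρ + 1 / (k * (k - 1))) + η}
      ((k * (k - 1) * ρ + 1) ^ (1 / k) *
        (∑ i, p i * (max (L i - η) 0) ^ (k / (k - 1))) ^ (1 / (k / (k - 1))) + η) := by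
  have hk0 : (0:ℝ) < k := lt_trans one_pos hk1
  have hkm : (0:ℝ) < k - 1 := by linarith
  have hkne : k ≠ 0 := ne_of_gt hk0
  have hkmne : k - 1 ≠ 0 := ne_of_gt hkm
  set q : ℝ := k / (k - 1) with hqdef
  have hq0 : 0 < q := div_pos hk0 hkm
  have hqne : q ≠ 0 := ne_of_gt hq0
  have hconj : k.HolderConjugate q := Real.HolderConjugate.conjExponent hk1
  have hqk : 1 / k + 1 / q = 1 := by rw [hqdef]; field_simp; ring
  set S : ℝ := ∑ i, p i * (max (L i - η) 0) ^ q with hSdef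
  have hS : 0 < S := hpos
  set ω : ℝ := (k * (k - 1) * ρ + 1) ^ (1 / k) with hωdef
  have hX : 0 < k * (k - 1) * ρ + 1 := by positivity
  have hω0 : 0 < ω := rpow_pos_of_pos hX _
  have hωk : ω ^ k = k * (k - 1) * ρ + 1 := by
    rw [hωdef, rpow_rpow hX.le, one_div, inv_mul_cancel₀ hkne, Real.rpow_one]
  set s : ℝ := S ^ (1 / q) with hsdef
  have hs0 : 0 < s := rpow_pos_of_pos hS _
  have hsq : s ^ q = S := by
    rw [hsdef, rpow_rpow hS.le, one_div, inv_mul_cancel₀ hqne, Real.rpow_one]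
  set B : ℝ := ρ + 1 / (k * (k - 1)) with hBdef
  have hB0 : 0 < B := by positivity
  have hkmB : (k - 1) * B = ω ^ k / k := by
    rw [hωk, hBdef]; field_simp
  have hkB : k * B = ω ^ k / (k - 1) := by
    rw [hωk, hBdef]; field_simp
  have hq1 : 1 - q = -(1 / (k - 1)) := by rw [hqdef]; field_simp; ring
  -- the minimizer
  set lamst : ℝ := (k - 1) * s * ω ^ (1 - k) with hlamdef
  have hlam0 : 0 < lamst := by positivity
  have hmem : ω * s + η ∈ {y : ℝ | ∃ lam : ℝ, 0 < lam ∧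
      y = (k - 1) ^ q / k * S * lam ^ (1 - q) + lam * B + η} := by
    refine ⟨lamst, hlam0, ?_⟩
    have h1 : lamst ^ (1 - q) = (k - 1) ^ (1 - q) * s ^ (1 - q) * ω := by
      rw [hlamdef, Real.mul_rpow (by positivity) (Real.rpow_nonneg hω0.le _),
        Real.mul_rpow hkm.le hs0.le, rpow_rpow hω0.le]
      have : (1 - k) * (1 - q) = 1 := by
        rw [hq1]; field_simp; ring
      rw [this, Real.rpow_one]
    have h2 : (k - 1) ^ q * (k - 1) ^ (1 - q) = k - 1 := by
      rw [← Real.rpow_add hkm, add_sub_cancel, Real.rpow_one]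
    have h3 : s ^ q * s ^ (1 - q) = s := by
      rw [← Real.rpow_add hs0, add_sub_cancel, Real.rpow_one]
    have hterm1 : (k - 1) ^ q / k * S * lamst ^ (1 - q) = (k - 1) * s * ω / k := by
      rw [h1, ← hsq]
      field_simp
      calc (k - 1) ^ q * s ^ q * (k - 1) ^ (1 - q) * s ^ (1 - q)
          = ((k - 1) ^ q * (k - 1) ^ (1 - q)) * (s ^ q * s ^ (1 - q)) := by ring
        _ = (k - 1) * s := by rw [h2, h3]
    have hterm2 : lamst * B = s * ω / k := by
      have h4 : ω ^ (1 - k) * ω ^ k = ω := by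
        rw [← Real.rpow_add hω0, sub_add_cancel, Real.rpow_one]
      calc lamst * B = s * (ω ^ (1 - k) * ((k - 1) * B)) := by rw [hlamdef]; ring
        _ = s * (ω ^ (1 - k) * (ω ^ k / k)) := by rw [hkmB]
        _ = s * ((ω ^ (1 - k) * ω ^ k) / k) := by ring
        _ = s * ω / k := by rw [h4]; ring
    rw [hterm1, hterm2]
    field_simp
    ring
  refine ⟨?_, fun lb hlb => hlb hmem⟩
  rintro y ⟨lam, hlam, rfl⟩
  have key : ω * s ≤ (k - 1) ^ q / k * S * lam ^ (1 - q) + lam * B := by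
    set a : ℝ := (k * B) ^ (1 / k) * lam ^ (1 / k) with hadef
    set b : ℝ := ((k - 1) ^ (q - 1) * S) ^ (1 / q) * lam ^ ((1 - q) / q) with hbdef
    have ha0 : 0 ≤ a := by positivity
    have hb0 : 0 ≤ b := by positivity
    have young := Real.young_inequality_of_nonneg ha0 hb0 hconj
    have hak : a ^ k / k = lam * B := by
      rw [hadef, Real.mul_rpow (Real.rpow_nonneg (by positivity) _)
        (Real.rpow_nonneg hlam.le _), rpow_rpow (by positivity : (0:ℝ) ≤ k * B),
        rpow_rpow hlam.le, one_div, inv_mul_cancel₀ hkne, Real.rpow_one, Real.rpow_one]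
      field_simp
    have hbq : b ^ q / q = (k - 1) ^ q / k * S * lam ^ (1 - q) := by
      rw [hbdef, Real.mul_rpow (Real.rpow_nonneg (by positivity) _)
        (Real.rpow_nonneg hlam.le _),
        rpow_rpow (by positivity : (0:ℝ) ≤ (k - 1) ^ (q - 1) * S),
        rpow_rpow hlam.le, one_div, inv_mul_cancel₀ hqne, Real.rpow_one,
        div_mul_cancel₀ _ hqne]
      have hq1' : (k - 1) ^ (q - 1) = (k - 1) ^ q / (k - 1) := by
        rw [Real.rpow_sub hkm, Real.rpow_one]
      have hqk' : (k - 1) * q = k := by rw [hqdef]; field_simp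
      have hrw : (k - 1) ^ q / (k - 1) * S * lam ^ (1 - q) / q
          = (k - 1) ^ q * S * lam ^ (1 - q) / ((k - 1) * q) := by
        field_simp
      rw [hq1', hrw, hqk']
      ring
    have hab : a * b = ω * s := by
      rw [hadef, hbdef]
      have hexp : lam ^ (1 / k) * lam ^ ((1 - q) / q) = 1 := by
        rw [← Real.rpow_add hlam]
        have : 1 / k + (1 - q) / q = 0 := by
          have : (1 - q) / q = 1 / q - 1 := by field_simp
          rw [this]; linarith [hqk]
        rw [this, Real.rpow_zero]
      have h5 : (k * B) ^ (1 / k) = ω / (k - 1) ^ (1 / k) := by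
        rw [hkB, Real.div_rpow (by positivity) hkm.le, rpow_rpow hω0.le,
          mul_one_div, div_self hkne, Real.rpow_one]
      have h6 : ((k - 1) ^ (q - 1) * S) ^ (1 / q) = (k - 1) ^ (1 / k) * s := by
        rw [Real.mul_rpow (Real.rpow_nonneg hkm.le _) hS.le, rpow_rpow hkm.le, ← hsdef]
        congr 2
        have : (q - 1) * (1 / q) = 1 - 1 / q := by field_simp
        rw [this]
        linarith [hqk]
      calc (k * B) ^ (1 / k) * lam ^ (1 / k) * (((k - 1) ^ (q - 1) * S) ^ (1 / q)
            * lam ^ ((1 - q) / q))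
          = ((k * B) ^ (1 / k) * ((k - 1) ^ (q - 1) * S) ^ (1 / q))
            * (lam ^ (1 / k) * lam ^ ((1 - q) / q)) := by ring
        _ = (ω / (k - 1) ^ (1 / k)) * ((k - 1) ^ (1 / k) * s) * 1 := by
            rw [hexp, h5, h6]
        _ = ω * s := by
            field_simp
    rw [hab, hak, hbq] at young
    linarith
  linarith
end

section
/- If η* < 0 is a critical point of η ↦ ω·(E[(L−η)_+^{k*}])^{1/k*} + η with L valued in [0, B] and ω > 1, then |η*| ≤ (1/ω)^{1/(k*−1)}·B / (1 − (1/ω)^{1/(k*−1)}). -/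
/-- If η* < 0 is a critical point of η ↦ ω (E[(L−η)₊^{k*}])^{1/k*} + η with L valued in
[0,B] and ω > 1, then |η*| ≤ (1/ω)^{1/(k*−1)} B / (1 − (1/ω)^{1/(k*−1)}). -/
theorem eta_star_bound {ι : Type*} [Fintype ι] (kst B ω ηstar : ℝ) (hkst : 2 ≤ kst)
    (hB : 0 < B) (hω : 1 < ω) (p L : ι → ℝ) (hp : ∀ i, 0 ≤ p i) (hpsum : ∑ i, p i = 1)
    (hL : ∀ i, L i ∈ Set.Icc (0 : ℝ) B) (hηstar : ηstar < 0)
    (hcrit : ω * (∑ i, p i * (max (L i - ηstar) 0) ^ kst) ^ ((1 - kst) / kst) *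
      (∑ i, p i * (max (L i - ηstar) 0) ^ (kst - 1)) = 1) :
    |ηstar| ≤ (1 / ω) ^ (1 / (kst - 1)) * B / (1 - (1 / ω) ^ (1 / (kst - 1))) := by
  have hω0 : (0:ℝ) < ω := by linarith
  have hk0 : (0:ℝ) < kst := by linarith
  have hk1 : (0:ℝ) < kst - 1 := by linarith
  set M : ℝ := -ηstar with hMdef
  have hM : 0 < M := by simp [hMdef]; linarith
  have hxpos : ∀ i, 0 < L i - ηstar := fun i => by have := (hL i).1; linarith
  have hxM : ∀ i, M ≤ L i - ηstar := fun i => by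
    have := (hL i).1; rw [hMdef]; linarith
  have hxB : ∀ i, L i - ηstar ≤ B + M := fun i => by
    have := (hL i).2; rw [hMdef]; linarith
  have hmax : ∀ i, max (L i - ηstar) 0 = L i - ηstar := fun i => max_eq_left (hxpos i).le
  simp only [hmax] at hcrit
  set Sk : ℝ := ∑ i, p i * (L i - ηstar) ^ kst with hSkdef
  set Sk1 : ℝ := ∑ i, p i * (L i - ηstar) ^ (kst - 1) with hSk1def
  have hSk_ge : M ^ kst ≤ Sk := by
    calc M ^ kst = (∑ i, p i) * M ^ kst := by rw [hpsum, one_mul]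
      _ = ∑ i, p i * M ^ kst := by rw [Finset.sum_mul]
      _ ≤ Sk := Finset.sum_le_sum fun i _ =>
          mul_le_mul_of_nonneg_left (Real.rpow_le_rpow hM.le (hxM i) hk0.le) (hp i)
  have hSk_pos : 0 < Sk := lt_of_lt_of_le (Real.rpow_pos_of_pos hM kst) hSk_ge
  have h1 : Sk ≤ (B + M) * Sk1 := by
    rw [hSkdef, hSk1def, Finset.mul_sum]
    apply Finset.sum_le_sum
    intro i _
    have hx := hxpos i
    have hsplit : (L i - ηstar) ^ kst = (L i - ηstar) ^ (kst - 1) * (L i - ηstar) := by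
      have h := Real.rpow_add hx (kst - 1) 1
      rw [Real.rpow_one] at h
      rw [show kst - 1 + 1 = kst by ring] at h
      exact h
    rw [hsplit]
    have ha : 0 ≤ p i * (L i - ηstar) ^ (kst - 1) :=
      mul_nonneg (hp i) (Real.rpow_nonneg hx.le _)
    nlinarith [mul_nonneg ha (sub_nonneg.2 (hxB i))]
  have hfoc : ω * Sk1 = Sk ^ ((kst - 1) / kst) := by
    have hneg : (kst - 1) / kst = -((1 - kst) / kst) := by ring
    rw [hneg, Real.rpow_neg hSk_pos.le]
    have hApos : 0 < Sk ^ ((1 - kst) / kst) := Real.rpow_pos_of_pos hSk_pos _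
    field_simp
    linear_combination hcrit
  have hSksplit : Sk = Sk ^ ((kst - 1) / kst) * Sk ^ (1 / kst) := by
    rw [← Real.rpow_add hSk_pos]
    have : (kst - 1) / kst + 1 / kst = 1 := by field_simp; ring
    rw [this, Real.rpow_one]
  have h2 : ω * Sk ≤ (B + M) * Sk ^ ((kst - 1) / kst) := by
    calc ω * Sk ≤ ω * ((B + M) * Sk1) := mul_le_mul_of_nonneg_left h1 hω0.le
      _ = (B + M) * (ω * Sk1) := by ring
      _ = (B + M) * Sk ^ ((kst - 1) / kst) := by rw [hfoc]
  have h3 : ω * Sk ^ (1 / kst) ≤ B + M := by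
    have hC : 0 < Sk ^ ((kst - 1) / kst) := Real.rpow_pos_of_pos hSk_pos _
    rw [hSksplit] at h2
    nlinarith [h2, hC]
  have hMT : M ≤ Sk ^ (1 / kst) := by
    have hMe : M = (M ^ kst) ^ (1 / kst) := by
      rw [← Real.rpow_mul hM.le, mul_one_div, div_self hk0.ne', Real.rpow_one]
    rw [hMe]
    exact Real.rpow_le_rpow (Real.rpow_nonneg hM.le kst) hSk_ge (by positivity)
  have hMB : ω * M ≤ B + M :=
    le_trans (mul_le_mul_of_nonneg_left hMT hω0.le) h3
  -- final part
  set e : ℝ := 1 / (kst - 1) with hedef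
  have he0 : 0 < e := by rw [hedef]; positivity
  have he1 : e ≤ 1 := by rw [hedef, div_le_one hk1]; linarith
  have hωepos : 0 < ω ^ e := Real.rpow_pos_of_pos hω0 e
  have hωe : ω ^ e ≤ ω := by
    calc ω ^ e ≤ ω ^ (1:ℝ) := Real.rpow_le_rpow_of_exponent_le hω.le he1
      _ = ω := Real.rpow_one ω
  have hωe1 : 1 < ω ^ e := by
    rw [Real.one_lt_rpow_iff_of_pos hω0]
    left; exact ⟨hω, he0⟩
  set q : ℝ := (1 / ω) ^ e with hqdef
  have hq : q = (ω ^ e)⁻¹ := by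
    rw [hqdef, one_div, ← Real.inv_rpow hω0.le]
  have hq0 : 0 < q := by rw [hq]; positivity
  have hq1 : q < 1 := by
    rw [hq]
    exact inv_lt_one_of_one_lt₀ hωe1
  have key : M ≤ q * (B + M) := by
    have h5 : M * ω ^ e ≤ B + M := by
      nlinarith [mul_le_mul_of_nonneg_left hωe hM.le, hMB]
    calc M = q * (M * ω ^ e) := by rw [hq]; field_simp
      _ ≤ q * (B + M) := mul_le_mul_of_nonneg_left h5 hq0.le
  rw [abs_of_neg hηstar, ← hMdef, le_div_iff₀ (by linarith : (0:ℝ) < 1 - q)]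
  nlinarith [key]
end
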